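/- Let v_1,...,v_m be points cyclically arranged on a circle with a labelling L: {v_1,...,v_m} → {1,2,3,4} such that no two cyclically adjacent vertices are labelled {1,3} or {2,4}. Define deg([a,b],L) as the number of cyclically consecutive pairs (v_k, v_{k+1}) with labels (a,b) minus the number with labels (b,a). Then deg([1,2],L) = deg([2,3],L) = deg([3,4],L) = deg([4,1],L). -/

import Mathlib

open Finset

/-- `cycDeg L a b` is the number of cyclically consecutive pairs
`(v k, v (k+1))` labelled `(a, b)` minus the number labelled `(b, a)`. -/
def cycDeg {m : ℕ} [NeZero m] (L : Fin m → Fin 4) (a b : Fin 4) : ℤ :=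
  ((Finset.univ.filter fun k : Fin m => L k = a ∧ L (k + 1) = b).card : ℤ) -
  ((Finset.univ.filter fun k : Fin m => L k = b ∧ L (k + 1) = a).card : ℤ)

private lemma cycN_sum {m : ℕ} [NeZero m] (L : Fin m → Fin 4) (a : Fin 4) :
    ∑ b : Fin 4, ((Finset.univ.filter fun k : Fin m => L k = a ∧ L (k + 1) = b).card : ℤ)
      = ∑ b : Fin 4, ((Finset.univ.filter fun k : Fin m => L k = b ∧ L (k + 1) = a).card : ℤ) := by
  have h1 : (Finset.univ.filter fun k : Fin m => L k = a).card
      = ∑ b : Fin 4, (Finset.univ.filter fun k : Fin m => L k = a ∧ L (k + 1) = b).card := by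
    rw [Finset.card_eq_sum_card_fiberwise (f := fun k => L (k + 1)) (t := Finset.univ)
      (fun x _ => mem_univ _)]
    simp [Finset.filter_filter]
  have h2 : (Finset.univ.filter fun k : Fin m => L (k + 1) = a).card
      = ∑ b : Fin 4, (Finset.univ.filter fun k : Fin m => L k = b ∧ L (k + 1) = a).card := by
    rw [Finset.card_eq_sum_card_fiberwise (f := fun k => L k) (t := Finset.univ)
      (fun x _ => mem_univ _)]
    simp [Finset.filter_filter, and_comm]
  have h3 : (Finset.univ.filter fun k : Fin m => L k = a).card
      = (Finset.univ.filter fun k : Fin m => L (k + 1) = a).card := by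
    apply Finset.card_nbij' (fun k => k - 1) (fun k => k + 1)
    · intro k hk
      simp only [mem_filter, mem_univ, true_and] at hk ⊢
      simpa using hk
    · intro k hk
      simp only [mem_filter, mem_univ, true_and] at hk ⊢
      simpa using hk
    · intro k _; simp
    · intro k _; simp
  rw [h1, h2] at h3
  exact_mod_cast h3

theorem cycDeg_eq {m : ℕ} [NeZero m] (L : Fin m → Fin 4)
    (hdiag : ∀ k : Fin m,
      ¬((L k = 0 ∧ L (k + 1) = 2) ∨ (L k = 2 ∧ L (k + 1) = 0) ∨
        (L k = 1 ∧ L (k + 1) = 3) ∨ (L k = 3 ∧ L (k + 1) = 1))) :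
    cycDeg L 0 1 = cycDeg L 1 2 ∧ cycDeg L 1 2 = cycDeg L 2 3 ∧
      cycDeg L 2 3 = cycDeg L 3 0 := by
  set N : Fin 4 → Fin 4 → ℤ := fun a b =>
    ((Finset.univ.filter fun k : Fin m => L k = a ∧ L (k + 1) = b).card : ℤ) with hN
  have hzero : N 0 2 = 0 ∧ N 2 0 = 0 ∧ N 1 3 = 0 ∧ N 3 1 = 0 := by
    refine ⟨?_, ?_, ?_, ?_⟩ <;>
    · simp only [hN, Int.natCast_eq_zero, Finset.card_eq_zero, Finset.filter_eq_empty_iff]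
      intro k _
      have := hdiag k
      tauto
  have hs0 := cycN_sum L 0
  have hs1 := cycN_sum L 1
  have hs2 := cycN_sum L 2
  have hs3 := cycN_sum L 3
  rw [Fin.sum_univ_four, Fin.sum_univ_four] at hs0 hs1 hs2 hs3
  have e : ∀ a b, cycDeg L a b = N a b - N b a := fun a b => rfl
  obtain ⟨z1, z2, z3, z4⟩ := hzero
  simp only [e, ← hN] at *
  refine ⟨by linarith, by linarith, by linarith⟩
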